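/- If l₁ < l₂, v(l₁) ≥ m and v(l₂) < m, then the optimal value z* of the MaxMin problem with m selected elements satisfies l₁ ≤ z* < l₂. -/

import Mathlib

theorem maxMin_optimum_bracketed_by_packing
    {n : ℕ} (d : Fin n → Fin n → ℝ) (hsym : ∀ i j, d i j = d j i)
    (m : ℕ) (hm : 2 ≤ m) (hmn : m ≤ n)
    (l₁ l₂ : ℝ) (hl : l₁ < l₂)
    (hv₁ : m ≤ (Finset.univ.powerset.filter
        (fun S : Finset (Fin n) => ∀ i ∈ S, ∀ j ∈ S, i ≠ j → l₁ ≤ d i j)).sup Finset.card)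
    (hv₂ : (Finset.univ.powerset.filter
        (fun S : Finset (Fin n) => ∀ i ∈ S, ∀ j ∈ S, i ≠ j → l₂ ≤ d i j)).sup Finset.card < m) :
    l₁ ≤ sSup {t : ℝ | ∃ M : Finset (Fin n), M.card = m ∧
            t = sInf {s : ℝ | ∃ i ∈ M, ∃ j ∈ M, i ≠ j ∧ s = d i j}} ∧
    sSup {t : ℝ | ∃ M : Finset (Fin n), M.card = m ∧
            t = sInf {s : ℝ | ∃ i ∈ M, ∃ j ∈ M, i ≠ j ∧ s = d i j}} < l₂ := by
  set T := {t : ℝ | ∃ M : Finset (Fin n), M.card = m ∧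
      t = sInf {s : ℝ | ∃ i ∈ M, ∃ j ∈ M, i ≠ j ∧ s = d i j}} with hTdef
  -- finiteness of the pair-distance sets
  have hSfin : ∀ M : Finset (Fin n),
      Set.Finite {s : ℝ | ∃ i ∈ M, ∃ j ∈ M, i ≠ j ∧ s = d i j} := by
    intro M
    apply Set.Finite.subset (Set.finite_range (fun p : Fin n × Fin n => d p.1 p.2))
    rintro s ⟨i, _, j, _, _, rfl⟩
    exact ⟨(i, j), rfl⟩
  have hSne : ∀ M : Finset (Fin n), M.card = m →
      Set.Nonempty {s : ℝ | ∃ i ∈ M, ∃ j ∈ M, i ≠ j ∧ s = d i j} := by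
    intro M hM
    obtain ⟨i, hi, j, hj, hij⟩ := Finset.one_lt_card.mp (by omega : 1 < M.card)
    exact ⟨d i j, i, hi, j, hj, hij, rfl⟩
  have hTfin : T.Finite := by
    apply Set.Finite.subset (Set.finite_range
      (fun M : Finset (Fin n) => sInf {s : ℝ | ∃ i ∈ M, ∃ j ∈ M, i ≠ j ∧ s = d i j}))
    rintro t ⟨M, _, rfl⟩
    exact ⟨M, rfl⟩
  -- T is nonempty
  have hTne : T.Nonempty := by
    obtain ⟨M, _, hMcard⟩ := Finset.exists_subset_card_eq (s := (Finset.univ : Finset (Fin n))) (n := m)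
      (by simpa using hmn)
    exact ⟨_, M, hMcard, rfl⟩
  -- every element of T is < l₂
  have hlt : ∀ t ∈ T, t < l₂ := by
    rintro t ⟨M, hMcard, rfl⟩
    have hx : ∃ i ∈ M, ∃ j ∈ M, i ≠ j ∧ d i j < l₂ := by
      by_contra hc
      push_neg at hc
      have hmem : M ∈ Finset.univ.powerset.filter
          (fun S : Finset (Fin n) => ∀ i ∈ S, ∀ j ∈ S, i ≠ j → l₂ ≤ d i j) := by
        simp only [Finset.mem_filter, Finset.mem_powerset]
        exact ⟨Finset.subset_univ M, fun i hi j hj hij => hc i hi j hj hij⟩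
      have := Finset.le_sup (f := Finset.card) hmem
      omega
    obtain ⟨i, hi, j, hj, hij, hdij⟩ := hx
    calc sInf {s : ℝ | ∃ i ∈ M, ∃ j ∈ M, i ≠ j ∧ s = d i j}
        ≤ d i j := csInf_le (hSfin M).bddBelow ⟨i, hi, j, hj, hij, rfl⟩
      _ < l₂ := hdij
  constructor
  · -- lower bound
    obtain ⟨S, hS, hScard⟩ := (Finset.le_sup_iff (by omega : (0:ℕ) < m)).mp hv₁
    simp only [Finset.mem_filter, Finset.mem_powerset] at hS
    obtain ⟨M, hMS, hMcard⟩ := Finset.exists_subset_card_eq (s := S) (n := m) hScard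
    have hTmem : sInf {s : ℝ | ∃ i ∈ M, ∃ j ∈ M, i ≠ j ∧ s = d i j} ∈ T :=
      ⟨M, hMcard, rfl⟩
    have hle : l₁ ≤ sInf {s : ℝ | ∃ i ∈ M, ∃ j ∈ M, i ≠ j ∧ s = d i j} := by
      apply le_csInf (hSne M hMcard)
      rintro s ⟨i, hi, j, hj, hij, rfl⟩
      exact hS.2 i (hMS hi) j (hMS hj) hij
    exact hle.trans (le_csSup hTfin.bddAbove hTmem)
  · exact hlt _ (hTne.csSup_mem hTfin)
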